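/- Let I be a tall ideal on ω. If I contains a cotower of length λ, then cov*(I) ≤ cf(λ) ≤ non*(I). -/

import Mathlib

open Set Cardinal

/-- `I` is a (proper) ideal on ω containing all finite sets. -/
def IsIdealOmega (I : Set (Set ℕ)) : Prop :=
  (∀ A ∈ I, ∀ B ⊆ A, B ∈ I) ∧ (∀ A ∈ I, ∀ B ∈ I, A ∪ B ∈ I) ∧
    (∀ A : Set ℕ, A.Finite → A ∈ I) ∧ Set.univ ∉ I

/-- `I` is tall: every infinite set contains an infinite member of `I`. -/
def IsTall (I : Set (Set ℕ)) : Prop :=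
  ∀ X : Set ℕ, X.Infinite → ∃ A ∈ I, A ⊆ X ∧ A.Infinite

/-- cov*(I): least size of a family in `I` meeting every infinite set infinitely. -/
noncomputable def covStar (I : Set (Set ℕ)) : Cardinal :=
  sInf {c | ∃ D : Set (Set ℕ), D ⊆ I ∧ Cardinal.mk D = c ∧
    ∀ X : Set ℕ, X.Infinite → ∃ A ∈ D, (X ∩ A).Infinite}

/-- non*(I): least size of a family of infinite sets such that every member of `I`
meets some member of the family only finitely. -/
noncomputable def nonStar (I : Set (Set ℕ)) : Cardinal :=
  sInf {c | ∃ 𝒳 : Set (Set ℕ), (∀ X ∈ 𝒳, X.Infinite) ∧ Cardinal.mk 𝒳 = c ∧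
    ∀ A ∈ I, ∃ X ∈ 𝒳, (A ∩ X).Finite}

theorem stmt2 (I : Set (Set ℕ)) (hI : IsIdealOmega I) (htall : IsTall I)
    (lam : Ordinal) (A : Ordinal → Set ℕ)
    (hmem : ∀ α < lam, A α ∈ I)
    (hmono : ∀ β α, β ≤ α → α < lam → (A β \ A α).Finite)
    (hnopu : ¬ ∃ Y : Set ℕ, Yᶜ.Infinite ∧ ∀ α < lam, (A α \ Y).Finite) :
    covStar I ≤ lam.cof ∧ lam.cof ≤ nonStar I := by
  obtain ⟨hdown, hunion, hfin, huniv⟩ := hI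
  -- complements of members of I are infinite
  have hcompl : ∀ B ∈ I, Bᶜ.Infinite := by
    intro B hB
    by_contra h
    rw [Set.not_infinite] at h
    have : B ∪ Bᶜ ∈ I := hunion B hB Bᶜ (hfin _ h)
    rw [Set.union_compl_self] at this
    exact huniv this
  -- key: if X is infinite and meets every A α (α < lam) finitely, contradiction
  have key : ∀ X : Set ℕ, X.Infinite → (∀ α < lam, (A α ∩ X).Finite) → False := by
    intro X hX h
    apply hnopu
    refine ⟨Xᶜ, by rwa [compl_compl], fun α hα => ?_⟩
    have : A α \ Xᶜ = A α ∩ X := by ext x; simp [Set.mem_diff]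
    rw [this]; exact h α hα
  constructor
  · -- covStar I ≤ lam.cof
    obtain ⟨ι, f, hlsub, hmk⟩ := Ordinal.exists_lsub_cof lam
    have hflt : ∀ i, f i < lam := fun i => hlsub ▸ Ordinal.lt_lsub f i
    set D : Set (Set ℕ) := Set.range (fun i => A (f i)) with hD
    have hDI : D ⊆ I := by rintro _ ⟨i, rfl⟩; exact hmem _ (hflt i)
    have hcov : ∀ X : Set ℕ, X.Infinite → ∃ B ∈ D, (X ∩ B).Infinite := by
      intro X hX
      by_contra h
      push_neg at h
      have hfin' : ∀ i, (A (f i) ∩ X).Finite := by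
        intro i
        have := h (A (f i)) ⟨i, rfl⟩
        rwa [Set.inter_comm] at this
      refine key X hX fun α hα => ?_
      obtain ⟨i, hi⟩ := Ordinal.lt_lsub_iff.1 (hlsub ▸ hα)
      have hsub : A α ∩ X ⊆ (A α \ A (f i)) ∪ (A (f i) ∩ X) := by
        intro x hx
        by_cases hx' : x ∈ A (f i)
        · exact Or.inr ⟨hx', hx.2⟩
        · exact Or.inl ⟨hx.1, hx'⟩
      exact ((hmono α (f i) hi (hflt i)).union (hfin' i)).subset hsub
    have : Cardinal.mk D ∈ {c | ∃ D : Set (Set ℕ), D ⊆ I ∧ Cardinal.mk D = c ∧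
        ∀ X : Set ℕ, X.Infinite → ∃ A ∈ D, (X ∩ A).Infinite} := ⟨D, hDI, rfl, hcov⟩
    calc covStar I ≤ Cardinal.mk D := csInf_le' this
      _ ≤ Cardinal.mk ι := Cardinal.mk_range_le
      _ = lam.cof := hmk
  · -- lam.cof ≤ nonStar I
    have hne : {c | ∃ 𝒳 : Set (Set ℕ), (∀ X ∈ 𝒳, X.Infinite) ∧ Cardinal.mk 𝒳 = c ∧
        ∀ A ∈ I, ∃ X ∈ 𝒳, (A ∩ X).Finite}.Nonempty := by
      refine ⟨_, {X : Set ℕ | X.Infinite}, fun X hX => hX, rfl, fun B hB => ?_⟩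
      exact ⟨Bᶜ, hcompl B hB, by rw [Set.inter_compl_self]; exact Set.finite_empty⟩
    obtain ⟨𝒳, hinf, hmk, hmeet⟩ := csInf_mem hne
    rw [nonStar, ← hmk]
    -- for each X ∈ 𝒳, there is α < lam with (A α ∩ X).Infinite
    have hex : ∀ X : ↥𝒳, {α : Ordinal | α < lam ∧ (A α ∩ (X : Set ℕ)).Infinite}.Nonempty := by
      rintro ⟨X, hX⟩
      by_contra h
      rw [Set.not_nonempty_iff_eq_empty, Set.eq_empty_iff_forall_notMem] at h
      refine key X (hinf X hX) fun α hα => ?_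
      by_contra hfin'
      exact h α ⟨hα, hfin'⟩
    set g : ↥𝒳 → Ordinal := fun X => sInf {α : Ordinal | α < lam ∧ (A α ∩ (X : Set ℕ)).Infinite}
      with hg
    have hgmem : ∀ X, g X < lam ∧ (A (g X) ∩ (X : Set ℕ)).Infinite := fun X => csInf_mem (hex X)
    -- g is unbounded: for β < lam, there is X with β < g X
    have hunb : ∀ β < lam, ∃ X : ↥𝒳, β < g X := by
      intro β hβ
      obtain ⟨X, hX, hfinX⟩ := hmeet (A β) (hmem β hβ)
      refine ⟨⟨X, hX⟩, ?_⟩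
      by_contra hle
      push_neg at hle
      have hsub : A (g ⟨X, hX⟩) ∩ X ⊆ (A (g ⟨X, hX⟩) \ A β) ∪ (A β ∩ X) := by
        intro x hx
        by_cases hx' : x ∈ A β
        · exact Or.inr ⟨hx', hx.2⟩
        · exact Or.inl ⟨hx.1, hx'⟩
      exact (hgmem ⟨X, hX⟩).2 (((hmono _ β hle hβ).union hfinX).subset hsub)
    have hlsub : Ordinal.lsub g = lam := by
      apply le_antisymm
      · exact Ordinal.lsub_le fun X => (hgmem X).1
      · by_contra h
        push_neg at h
        obtain ⟨X, hX⟩ := hunb _ h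
        exact absurd (Ordinal.lt_lsub g X) (not_lt.2 hX.le)
    calc lam.cof = (Ordinal.lsub g).cof := by rw [hlsub]
      _ ≤ Cardinal.mk ↥𝒳 := Ordinal.cof_lsub_le g
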